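/- Let ω be a pure state on a bipartite algebra and suppose a vector Φ ∈ K_A ⊗ K_B is distillable from ω, i.e. there exist unital completely positive maps D_j : B(K_j) → A_j with ω(D_A(a)D_B(b)) = ⟨Φ, (a ⊗ b)Φ⟩ for all a ∈ B(K_A), b ∈ B(K_B). If ω admits a compression into M_k with a tensor-split vector (Schmidt rank ≤ k), then the vector Schmidt rank of Φ is at most k. -/

import Mathlib

/- STATEMENT 19 (monotonicity of the Schmidt rank / distillation bound): if a vector
Φ ∈ K_A ⊗ K_B is distillable from a pure bipartite state ω, and ω admits a compression into
M_k with a tensor-split vector, then the vector Schmidt rank of Φ is at most k. -/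

open scoped ComplexOrder InnerProductSpace

/-- The tensor product X ⊗ Y of operators on finite-dimensional Euclidean spaces, realized
via the Kronecker product of the corresponding matrices. -/
noncomputable def tensorOp {dA dB : ℕ}
    (X : EuclideanSpace ℂ (Fin dA) →L[ℂ] EuclideanSpace ℂ (Fin dA))
    (Y : EuclideanSpace ℂ (Fin dB) →L[ℂ] EuclideanSpace ℂ (Fin dB)) :
    EuclideanSpace ℂ (Fin dA × Fin dB) →L[ℂ] EuclideanSpace ℂ (Fin dA × Fin dB) :=
  Matrix.toEuclideanCLM (𝕜 := ℂ)
    (Matrix.kroneckerMap (· * ·) ((Matrix.toEuclideanCLM (𝕜 := ℂ)).symm X)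
      ((Matrix.toEuclideanCLM (𝕜 := ℂ)).symm Y))

/-- The elementary tensor x ⊗ y in the Euclidean tensor product ℂ^{dA} ⊗ ℂ^{dB}. -/
noncomputable def tensorVec {dA dB : ℕ} (x : EuclideanSpace ℂ (Fin dA))
    (y : EuclideanSpace ℂ (Fin dB)) : EuclideanSpace ℂ (Fin dA × Fin dB) :=
  (WithLp.equiv 2 (Fin dA × Fin dB → ℂ)).symm
    fun q => WithLp.equiv 2 (Fin dA → ℂ) x q.1 * WithLp.equiv 2 (Fin dB → ℂ) y q.2

open scoped InnerProductSpace
open Matrix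

namespace SchmidtAux

lemma quad {m n : ℕ} (v : EuclideanSpace ℂ (Fin m × Fin n))
    (P : Matrix (Fin m) (Fin m) ℂ) (Q : Matrix (Fin n) (Fin n) ℂ) :
    ⟪v, Matrix.toEuclideanLin (Matrix.kroneckerMap (· * ·) P Q) v⟫_ℂ
      = Matrix.trace ((Matrix.of fun i j => v (i, j))ᴴ * P * (Matrix.of fun i j => v (i, j)) * Qᵀ) := by
  simp only [Matrix.toEuclideanLin_apply, PiLp.inner_apply, Matrix.trace, Matrix.diag_apply,
    Matrix.mul_apply, Matrix.mulVec, dotProduct, Matrix.kroneckerMap_apply,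
    PiLp.toLp_apply, WithLp.equiv_symm_apply, Matrix.conjTranspose_apply,
    Matrix.transpose_apply, Matrix.of_apply, RCLike.inner_apply, starRingEnd_apply]
  simp only [Finset.mul_sum, Finset.sum_mul]
  rw [show (Finset.univ.sum fun x : Fin m × Fin n => Finset.univ.sum fun i : Fin m × Fin n =>
      P x.1 i.1 * Q x.2 i.2 * v i * star (v x) : ℂ)
    = Finset.univ.sum fun x : Fin m × Fin n => Finset.univ.sum fun i : Fin m × Fin n =>
      star (v x) * (P x.1 i.1 * Q x.2 i.2 * v i) by
      congr 1; funext x; congr 1; funext i; ring]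
  rw [show (Finset.univ.sum fun x : Fin m × Fin n => Finset.univ.sum fun i : Fin m × Fin n =>
      star (v x) * (P x.1 i.1 * Q x.2 i.2 * v i) : ℂ)
    = Finset.univ.sum fun z : (Fin m × Fin n) × (Fin m × Fin n) =>
      star (v z.1) * (P z.1.1 z.2.1 * Q z.1.2 z.2.2 * v z.2) by
      simp only [Fintype.sum_prod_type]]
  rw [show (Finset.univ.sum fun x : Fin n => Finset.univ.sum fun x1 : Fin n =>
      Finset.univ.sum fun x2 : Fin m => Finset.univ.sum fun x3 : Fin m =>
      star (v (x3, x)) * P x3 x2 * v (x2, x1) * Q x x1 : ℂ)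
    = Finset.univ.sum fun z : (Fin n × Fin n) × (Fin m × Fin m) =>
      star (v (z.2.2, z.1.1)) * P z.2.2 z.2.1 * v (z.2.1, z.1.2) * Q z.1.1 z.1.2 by
      simp only [Fintype.sum_prod_type]]
  apply Fintype.sum_bijective (fun z : (Fin m × Fin n) × (Fin m × Fin n) =>
    (((z.1.2, z.2.2), (z.2.1, z.1.1)) : (Fin n × Fin n) × (Fin m × Fin m)))
  · exact (Equiv.mk (fun z : (Fin m × Fin n) × (Fin m × Fin n) => ((z.1.2, z.2.2), (z.2.1, z.1.1)))
      (fun w => ((w.2.2, w.1.1), (w.2.1, w.1.2))) (fun z => rfl) (fun w => rfl)).bijective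
  · intro z
    ring

lemma trace_mul_ext {d : ℕ} {N1 N2 : Matrix (Fin d) (Fin d) ℂ}
    (h : ∀ X, Matrix.trace (X * N1) = Matrix.trace (X * N2)) : N1 = N2 := by
  ext a b
  have := h (Matrix.single b a 1)
  simpa [Matrix.trace, Matrix.mul_apply, Matrix.single, Matrix.diag,
    Finset.sum_ite_eq, ite_and] using this

/-- the trace-duality adjoint identity -/
lemma adj_trace {d k : ℕ} (S : Matrix (Fin d) (Fin d) ℂ →ₗ[ℂ] Matrix (Fin k) (Fin k) ℂ)
    (X : Matrix (Fin d) (Fin d) ℂ) (K : Matrix (Fin k) (Fin k) ℂ) :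
    Matrix.trace (S X * K)
      = Matrix.trace (X * (Matrix.of fun a b =>
          Matrix.trace (S (Matrix.single b a 1) * K))) := by
  have hX : S X = ∑ i : Fin d, ∑ j : Fin d, X i j • S (Matrix.single i j 1) := by
    conv_lhs => rw [Matrix.matrix_eq_sum_single X]
    rw [map_sum]
    congr 1; funext i
    rw [map_sum]
    congr 1; funext j
    rw [← _root_.map_smul, Matrix.smul_single, smul_eq_mul, mul_one]
  rw [hX]
  simp only [Finset.sum_mul, Matrix.smul_mul, Matrix.trace_sum, Matrix.trace_smul]
  simp only [Matrix.trace, Matrix.diag_apply, Matrix.mul_apply, Matrix.of_apply]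
  simp only [smul_eq_mul, Finset.mul_sum]


lemma mul_vecMulVec_mul {dA dB : ℕ} (M : Matrix (Fin dA) (Fin dB) ℂ) (w w' : Fin dB → ℂ) :
    M * (Matrix.vecMulVec w (star w')) * Mᴴ
      = Matrix.vecMulVec (M *ᵥ w) (star (M *ᵥ w')) := by
  rw [Matrix.vecMulVec_eq (Fin 1), Matrix.vecMulVec_eq (Fin 1), Matrix.star_mulVec,
    Matrix.replicateCol_mulVec, Matrix.replicateRow_vecMul]
  simp only [Matrix.mul_assoc]

lemma star_linearIndependent {d r : ℕ} (u : Fin r → (Fin d → ℂ))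
    (hu : LinearIndependent ℂ u) : LinearIndependent ℂ (fun j => star (u j)) := by
  rw [Fintype.linearIndependent_iff] at hu ⊢
  intro g hg j
  have h2 : ∑ i : Fin r, star (g i) • u i = 0 := by
    have := congrArg star hg
    rw [star_sum] at this
    simpa [star_smul] using this
  have := hu (fun i => star (g i)) h2 j
  simpa using congrArg star this

lemma vecMulVec_linearIndependent {d r : ℕ} (u : Fin r → (Fin d → ℂ))
    (hu : LinearIndependent ℂ u) :
    LinearIndependent ℂ
      (fun ij : Fin r × Fin r => Matrix.vecMulVec (u ij.1) (star (u ij.2))) := by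
  have hstar := star_linearIndependent u hu
  rw [Fintype.linearIndependent_iff] at hu hstar ⊢
  intro g hg
  have hpq : ∀ p q, ∑ ij : Fin r × Fin r, g ij * (u ij.1 p * star (u ij.2 q)) = 0 := by
    intro p q
    have h0 := congrArg (fun m : Matrix (Fin d) (Fin d) ℂ => m p q) hg
    simpa [Matrix.sum_apply, Matrix.vecMulVec_apply, smul_eq_mul, mul_assoc] using h0
  have key : ∀ (i : Fin r) (q : Fin d), ∑ j : Fin r, g (i, j) * star (u j q) = 0 := by
    intro i q
    have h2 : ∑ i' : Fin r, (∑ j : Fin r, g (i', j) * star (u j q)) • u i' = 0 := by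
      funext p
      have h3 := hpq p q
      rw [Fintype.sum_prod_type] at h3
      simpa [Finset.sum_apply, Pi.smul_apply, smul_eq_mul, Finset.sum_mul, Finset.mul_sum,
        mul_assoc, mul_comm, mul_left_comm] using h3
    exact hu _ h2 i
  rintro ⟨i, j⟩
  have h2 : ∑ j' : Fin r, g (i, j') • star (u j') = 0 := by
    funext q
    simpa [Finset.sum_apply, Pi.smul_apply, smul_eq_mul] using key i q
  exact hstar (fun j' => g (i, j')) h2 j


lemma sum_dite_fin {r k : ℕ} (hrk : r ≤ k) (g : Fin r → ℂ) :
    ∑ i : Fin k, (if h : (i : ℕ) < r then g ⟨i, h⟩ else 0) = ∑ j : Fin r, g j := by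
  rw [show (∑ j : Fin r, g j)
      = ∑ i ∈ Finset.univ.map (Fin.castLEEmb hrk), (if h : (i : ℕ) < r then g ⟨i, h⟩ else 0) by
    rw [Finset.sum_map]
    apply Finset.sum_congr rfl
    intro j _
    simp [Fin.castLEEmb, Fin.castLE]]
  symm
  apply Finset.sum_subset (Finset.subset_univ _)
  intro i _ hi
  rw [dif_neg]
  intro hlt
  exact hi (Finset.mem_map.2 ⟨⟨(i : ℕ), hlt⟩, Finset.mem_univ _, by
    simp [Fin.castLEEmb, Fin.castLE]⟩)


lemma decomp {dA dB k : ℕ} (M : Matrix (Fin dA) (Fin dB) ℂ)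
    (h : Module.finrank ℂ (LinearMap.range M.mulVecLin) ≤ k) :
    ∃ (x : Fin k → (Fin dA → ℂ)) (y : Fin k → (Fin dB → ℂ)),
      ∀ p q, M p q = ∑ i : Fin k, x i p * y i q := by
  set Col := LinearMap.range M.mulVecLin with hCol
  let b := Module.finBasis ℂ Col
  set r := Module.finrank ℂ Col with hr
  have colmem : ∀ q, (fun p => M p q) ∈ Col := by
    intro q
    refine ⟨Pi.single q 1, ?_⟩
    simp [Matrix.mulVecLin_apply]
    rfl
  refine ⟨fun i => if h' : (i : ℕ) < r then (b ⟨i, h'⟩ : Fin dA → ℂ) else 0,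
          fun i q => if h' : (i : ℕ) < r
            then b.repr ⟨fun p => M p q, colmem q⟩ ⟨i, h'⟩ else 0, ?_⟩
  intro p q
  have hrepr := b.sum_repr ⟨fun p => M p q, colmem q⟩
  have hv : ∑ i : Fin r, b.repr ⟨fun p => M p q, colmem q⟩ i * (b i : Fin dA → ℂ) p
      = M p q := by
    have h1 := congrArg (fun v : Col => (v : Fin dA → ℂ) p) hrepr
    simpa only [Submodule.coe_sum, Submodule.coe_smul, Finset.sum_apply, Pi.smul_apply, smul_eq_mul] using h1
  rw [show (∑ i : Fin k,
        (if h' : (i : ℕ) < r then (b ⟨i, h'⟩ : Fin dA → ℂ) else 0) p *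
        (if h' : (i : ℕ) < r then b.repr ⟨fun p => M p q, colmem q⟩ ⟨i, h'⟩ else 0))
      = ∑ i : Fin k, (if h' : (i : ℕ) < r
          then b.repr ⟨fun p => M p q, colmem q⟩ ⟨i, h'⟩ * (b ⟨i, h'⟩ : Fin dA → ℂ) p
          else 0) by
    apply Finset.sum_congr rfl
    intro i _
    split
    · ring
    · simp]
  rw [← hv]
  exact (sum_dite_fin h
    (fun j => b.repr ⟨fun p => M p q, colmem q⟩ j * (b j : Fin dA → ℂ) p)).symm


lemma rank_le_of_range_le {dA dB k : ℕ} (M : Matrix (Fin dA) (Fin dB) ℂ)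
    (V : Submodule ℂ (Matrix (Fin dA) (Fin dA) ℂ)) (hV : Module.finrank ℂ V ≤ k * k)
    (hmem : ∀ Z : Matrix (Fin dB) (Fin dB) ℂ, M * Z * Mᴴ ∈ V) :
    Module.finrank ℂ (LinearMap.range M.mulVecLin) ≤ k := by
  by_contra hlt
  push_neg at hlt
  set Col := LinearMap.range M.mulVecLin with hCol
  have hk1 : k + 1 ≤ Module.finrank ℂ Col := hlt
  let b := Module.finBasis ℂ Col
  let u : Fin (k+1) → (Fin dA → ℂ) := fun i => (b (Fin.castLE hk1 i) : Fin dA → ℂ)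
  have humem : ∀ i, u i ∈ Col := fun i => (b (Fin.castLE hk1 i)).2
  have huind : LinearIndependent ℂ u := by
    have h1 : LinearIndependent ℂ (fun i : Fin (k+1) => b (Fin.castLE hk1 i)) :=
      b.linearIndependent.comp (Fin.castLE hk1) (Fin.castLE_injective hk1)
    have h2 := h1.map' Col.subtype (Submodule.ker_subtype Col)
    exact h2
  have hw : ∀ i, ∃ w : Fin dB → ℂ, M *ᵥ w = u i := by
    intro i
    obtain ⟨w, hw⟩ := humem i
    exact ⟨w, by simpa [Matrix.mulVecLin_apply] using hw⟩
  choose w hwv using hw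
  have hFind := vecMulVec_linearIndependent u huind
  have hFmem : ∀ ij : Fin (k+1) × Fin (k+1),
      Matrix.vecMulVec (u ij.1) (star (u ij.2)) ∈ V := by
    intro ij
    rw [← hwv ij.1, ← hwv ij.2, ← mul_vecMulVec_mul M (w ij.1) (w ij.2)]
    exact hmem _
  let F' : Fin (k+1) × Fin (k+1) → V := fun ij => ⟨_, hFmem ij⟩
  have hF'ind : LinearIndependent ℂ F' := by
    apply LinearIndependent.of_comp V.subtype
    exact hFind
  have hcard := hF'ind.fintype_card_le_finrank
  simp only [Fintype.card_prod, Fintype.card_fin] at hcard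
  have := hcard.trans hV
  nlinarith


noncomputable def adjMap {d k : ℕ}
    (S : Matrix (Fin d) (Fin d) ℂ →ₗ[ℂ] Matrix (Fin k) (Fin k) ℂ)
    (W : Matrix (Fin k) (Fin k) ℂ) :
    Matrix (Fin k) (Fin k) ℂ →ₗ[ℂ] Matrix (Fin d) (Fin d) ℂ where
  toFun Z := Matrix.of fun a b =>
    Matrix.trace (S (Matrix.single b a 1) * (W * Z * Wᴴ))
  map_add' Z1 Z2 := by
    ext a b
    simp [Matrix.mul_add, Matrix.add_mul, Matrix.trace_add]
  map_smul' c Z := by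
    ext a b
    simp [Matrix.mul_smul, Matrix.smul_mul, Matrix.trace_smul]

lemma exists_lin {A : Type*} [NormedRing A] [StarRing A] [CStarRing A] [NormedAlgebra ℂ A]
    [CompleteSpace A] [StarModule ℂ A] [NormedStarGroup A] (S0 : StarSubalgebra ℂ A) {d k : ℕ}
    (Cm : S0 →ₗ[ℂ] Matrix (Fin k) (Fin k) ℂ)
    (D : (EuclideanSpace ℂ (Fin d) →L[ℂ] EuclideanSpace ℂ (Fin d)) →ₗ[ℂ] A)
    (hmem : ∀ X, D X ∈ S0) :
    ∃ S : Matrix (Fin d) (Fin d) ℂ →ₗ[ℂ] Matrix (Fin k) (Fin k) ℂ,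
      ∀ X : Matrix (Fin d) (Fin d) ℂ,
        S X = Cm ⟨D (Matrix.toEuclideanCLM (𝕜 := ℂ) X), hmem _⟩ := by
  refine ⟨{ toFun := fun X => Cm ⟨D (Matrix.toEuclideanCLM (𝕜 := ℂ) X), hmem _⟩,
            map_add' := ?_, map_smul' := ?_ }, fun X => rfl⟩
  · intro X Y
    have h1 : (⟨D (Matrix.toEuclideanCLM (𝕜 := ℂ) (X + Y)), hmem _⟩ : S0)
        = ⟨D (Matrix.toEuclideanCLM (𝕜 := ℂ) X), hmem _⟩
          + ⟨D (Matrix.toEuclideanCLM (𝕜 := ℂ) Y), hmem _⟩ := by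
      apply Subtype.ext
      simp
    show Cm ⟨D (Matrix.toEuclideanCLM (𝕜 := ℂ) (X + Y)), hmem _⟩
        = Cm ⟨D (Matrix.toEuclideanCLM (𝕜 := ℂ) X), hmem _⟩
          + Cm ⟨D (Matrix.toEuclideanCLM (𝕜 := ℂ) Y), hmem _⟩
    rw [h1, map_add]
  · intro c X
    have h1 : (⟨D (Matrix.toEuclideanCLM (𝕜 := ℂ) (c • X)), hmem _⟩ : S0)
        = c • ⟨D (Matrix.toEuclideanCLM (𝕜 := ℂ) X), hmem _⟩ := by
      apply Subtype.ext
      simp [_root_.map_smul]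
    show Cm ⟨D (Matrix.toEuclideanCLM (𝕜 := ℂ) (c • X)), hmem _⟩
        = (RingHom.id ℂ) c • Cm ⟨D (Matrix.toEuclideanCLM (𝕜 := ℂ) X), hmem _⟩
    rw [h1, _root_.map_smul]
    rfl

end SchmidtAux

theorem schmidt_rank_of_distillable_vector_le
    {A : Type*} [NormedRing A] [StarRing A] [CStarRing A] [NormedAlgebra ℂ A]
    [CompleteSpace A] [StarModule ℂ A] [NormedStarGroup A]
    (SA SB : StarSubalgebra ℂ A)
    (hcomm : ∀ a ∈ SA, ∀ b ∈ SB, a * b = b * a)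
    (hint : ∀ x, x ∈ SA → x ∈ SB → ∃ c : ℂ, x = c • (1 : A))
    (hgen : (SA ⊔ SB).topologicalClosure = ⊤)
    (ω : A →L[ℂ] ℂ) (hω1 : ω 1 = 1) (hωpos : ∀ a : A, 0 ≤ ω (star a * a))
    -- ω is pure
    (hωpure : ∀ ν : A →ₗ[ℂ] ℂ, (∀ a, 0 ≤ ν (star a * a)) →
      (∀ a, 0 ≤ ω (star a * a) - ν (star a * a)) →
      ∃ s : ℝ, 0 ≤ s ∧ s ≤ 1 ∧ ∀ a, ν a = (s : ℂ) * ω a)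
    -- the vector Φ ∈ K_A ⊗ K_B is distillable from ω via unital cp maps D_A, D_B
    (dA dB : ℕ) (Φ : EuclideanSpace ℂ (Fin dA × Fin dB))
    (DA : (EuclideanSpace ℂ (Fin dA) →L[ℂ] EuclideanSpace ℂ (Fin dA)) →ₗ[ℂ] A)
    (DB : (EuclideanSpace ℂ (Fin dB) →L[ℂ] EuclideanSpace ℂ (Fin dB)) →ₗ[ℂ] A)
    (hDAmem : ∀ X, DA X ∈ SA) (hDBmem : ∀ Y, DB Y ∈ SB)
    (hDA1 : DA 1 = 1) (hDB1 : DB 1 = 1)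
    (hDAcp : ∀ (N : ℕ) (X : Fin N → (EuclideanSpace ℂ (Fin dA) →L[ℂ] EuclideanSpace ℂ (Fin dA))),
      ∃ y : Matrix (Fin N) (Fin N) A,
        Matrix.of (fun i j => DA (star (X i) * X j)) = star y * y)
    (hDBcp : ∀ (N : ℕ) (Y : Fin N → (EuclideanSpace ℂ (Fin dB) →L[ℂ] EuclideanSpace ℂ (Fin dB))),
      ∃ y : Matrix (Fin N) (Fin N) A,
        Matrix.of (fun i j => DB (star (Y i) * Y j)) = star y * y)
    (hdistill : ∀ (X : EuclideanSpace ℂ (Fin dA) →L[ℂ] EuclideanSpace ℂ (Fin dA))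
        (Y : EuclideanSpace ℂ (Fin dB) →L[ℂ] EuclideanSpace ℂ (Fin dB)),
      ω (DA X * DB Y) = ⟪Φ, tensorOp X Y Φ⟫_ℂ)
    -- ω admits a compression into M_k with a tensor-split vector
    (k : ℕ)
    (CmA : SA →ₗ[ℂ] Matrix (Fin k) (Fin k) ℂ) (CmB : SB →ₗ[ℂ] Matrix (Fin k) (Fin k) ℂ)
    (hCmA1 : CmA 1 = 1) (hCmB1 : CmB 1 = 1)
    (hCmAcp : ∀ (N : ℕ) (a : Fin N → SA) (ξ : Fin N → EuclideanSpace ℂ (Fin k)),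
      0 ≤ ∑ i : Fin N, ∑ j : Fin N,
        ⟪ξ i, Matrix.toEuclideanLin (CmA (star (a i) * a j)) (ξ j)⟫_ℂ)
    (hCmBcp : ∀ (N : ℕ) (b : Fin N → SB) (ξ : Fin N → EuclideanSpace ℂ (Fin k)),
      0 ≤ ∑ i : Fin N, ∑ j : Fin N,
        ⟪ξ i, Matrix.toEuclideanLin (CmB (star (b i) * b j)) (ξ j)⟫_ℂ)
    (Ψ : EuclideanSpace ℂ (Fin k × Fin k)) (hΨ : ‖Ψ‖ = 1)
    (hcompr : ∀ (a : SA) (b : SB),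
      ω ((a : A) * (b : A))
        = ⟪Ψ, Matrix.toEuclideanLin (Matrix.kroneckerMap (· * ·) (CmA a) (CmB b)) Ψ⟫_ℂ) :
    -- then the vector Schmidt rank of Φ is at most k
    ∃ (c : Fin k → ℂ) (x : Fin k → EuclideanSpace ℂ (Fin dA))
      (y : Fin k → EuclideanSpace ℂ (Fin dB)),
      Φ = ∑ i, c i • tensorVec (x i) (y i) := by
  classical
  obtain ⟨S, hS⟩ := SchmidtAux.exists_lin SA CmA DA hDAmem
  obtain ⟨R, hR⟩ := SchmidtAux.exists_lin SB CmB DB hDBmem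
  have key : ∀ (X : Matrix (Fin dA) (Fin dA) ℂ) (Y : Matrix (Fin dB) (Fin dB) ℂ),
      Matrix.trace ((Matrix.of fun i j => Φ (i, j))ᴴ * X * (Matrix.of fun i j => Φ (i, j)) * Yᵀ)
        = Matrix.trace ((Matrix.of fun i j => Ψ (i, j))ᴴ * S X
            * (Matrix.of fun i j => Ψ (i, j)) * (R Y)ᵀ) := by
    intro X Y
    have h1 := hdistill (Matrix.toEuclideanCLM (𝕜 := ℂ) X) (Matrix.toEuclideanCLM (𝕜 := ℂ) Y)
    have h2 := hcompr ⟨DA (Matrix.toEuclideanCLM (𝕜 := ℂ) X), hDAmem _⟩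
      ⟨DB (Matrix.toEuclideanCLM (𝕜 := ℂ) Y), hDBmem _⟩
    have h3 : tensorOp (Matrix.toEuclideanCLM (𝕜 := ℂ) X) (Matrix.toEuclideanCLM (𝕜 := ℂ) Y)
        = Matrix.toEuclideanCLM (𝕜 := ℂ) (Matrix.kroneckerMap (· * ·) X Y) := by
      rw [tensorOp, StarAlgEquiv.symm_apply_apply, StarAlgEquiv.symm_apply_apply]
    rw [h3] at h1
    have h4 : ⟪Φ, (Matrix.toEuclideanCLM (𝕜 := ℂ) (Matrix.kroneckerMap (· * ·) X Y)) Φ⟫_ℂ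
        = ⟪Φ, Matrix.toEuclideanLin (Matrix.kroneckerMap (· * ·) X Y) Φ⟫_ℂ := rfl
    rw [h4] at h1
    have h12 := h1.symm.trans h2
    rw [SchmidtAux.quad Φ X Y] at h12
    rw [SchmidtAux.quad Ψ (CmA ⟨DA (Matrix.toEuclideanCLM (𝕜 := ℂ) X), hDAmem _⟩)
      (CmB ⟨DB (Matrix.toEuclideanCLM (𝕜 := ℂ) Y), hDBmem _⟩)] at h12
    rw [hS, hR]
    exact h12
  have hmat : ∀ Y : Matrix (Fin dB) (Fin dB) ℂ,
      (Matrix.of fun i j => Φ (i, j)) * Yᵀ * (Matrix.of fun i j => Φ (i, j))ᴴ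
        = SchmidtAux.adjMap S (Matrix.of fun i j => Ψ (i, j)) ((R Y)ᵀ) := by
    intro Y
    apply SchmidtAux.trace_mul_ext
    intro X
    have e1 : Matrix.trace (X * ((Matrix.of fun i j => Φ (i, j)) * Yᵀ
          * (Matrix.of fun i j => Φ (i, j))ᴴ))
        = Matrix.trace ((Matrix.of fun i j => Φ (i, j))ᴴ * X
            * (Matrix.of fun i j => Φ (i, j)) * Yᵀ) := by
      rw [show X * ((Matrix.of fun i j => Φ (i, j)) * Yᵀ * (Matrix.of fun i j => Φ (i, j))ᴴ)
          = (X * ((Matrix.of fun i j => Φ (i, j)) * Yᵀ)) * (Matrix.of fun i j => Φ (i, j))ᴴ by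
        simp only [Matrix.mul_assoc]]
      rw [Matrix.trace_mul_cycle]
      simp only [Matrix.mul_assoc]
    have e2 : Matrix.trace (X * SchmidtAux.adjMap S (Matrix.of fun i j => Ψ (i, j)) ((R Y)ᵀ))
        = Matrix.trace ((Matrix.of fun i j => Ψ (i, j))ᴴ * S X
            * (Matrix.of fun i j => Ψ (i, j)) * (R Y)ᵀ) := by
      have hadj : SchmidtAux.adjMap S (Matrix.of fun i j => Ψ (i, j)) ((R Y)ᵀ)
          = Matrix.of fun a b => Matrix.trace (S (Matrix.single b a 1)
              * ((Matrix.of fun i j => Ψ (i, j)) * (R Y)ᵀ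
                * (Matrix.of fun i j => Ψ (i, j))ᴴ)) := rfl
      rw [hadj, ← SchmidtAux.adj_trace S X
        ((Matrix.of fun i j => Ψ (i, j)) * (R Y)ᵀ * (Matrix.of fun i j => Ψ (i, j))ᴴ)]
      rw [show S X * ((Matrix.of fun i j => Ψ (i, j)) * (R Y)ᵀ
            * (Matrix.of fun i j => Ψ (i, j))ᴴ)
          = (S X * ((Matrix.of fun i j => Ψ (i, j)) * (R Y)ᵀ))
            * (Matrix.of fun i j => Ψ (i, j))ᴴ by simp only [Matrix.mul_assoc]]
      rw [Matrix.trace_mul_cycle]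
      simp only [Matrix.mul_assoc]
    rw [e1, e2]
    exact key X Y
  have hmemV : ∀ Z : Matrix (Fin dB) (Fin dB) ℂ,
      (Matrix.of fun i j => Φ (i, j)) * Z * (Matrix.of fun i j => Φ (i, j))ᴴ
        ∈ LinearMap.range (SchmidtAux.adjMap S (Matrix.of fun i j => Ψ (i, j))) := by
    intro Z
    refine ⟨(R Zᵀ)ᵀ, ?_⟩
    rw [← hmat Zᵀ, Matrix.transpose_transpose]
  have hV : Module.finrank ℂ
      (LinearMap.range (SchmidtAux.adjMap S (Matrix.of fun i j => Ψ (i, j)))) ≤ k * k := by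
    refine le_trans (LinearMap.finrank_range_le _) ?_
    rw [Module.finrank_matrix]
    simp
  have hrank := SchmidtAux.rank_le_of_range_le (Matrix.of fun i j => Φ (i, j)) _ hV hmemV
  obtain ⟨x0, y0, hxy⟩ := SchmidtAux.decomp (Matrix.of fun i j => Φ (i, j)) hrank
  refine ⟨fun _ => 1, fun i => (WithLp.equiv 2 (Fin dA → ℂ)).symm (x0 i),
    fun i => (WithLp.equiv 2 (Fin dB → ℂ)).symm (y0 i), ?_⟩
  apply (WithLp.linearEquiv 2 ℂ (Fin dA × Fin dB → ℂ)).injective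
  rw [map_sum]
  funext pq
  obtain ⟨p, q⟩ := pq
  rw [Finset.sum_apply]
  have hL : WithLp.linearEquiv 2 ℂ (Fin dA × Fin dB → ℂ) Φ (p, q) = Φ (p, q) := rfl
  rw [hL]
  have hterm : ∀ i : Fin k,
      (WithLp.linearEquiv 2 ℂ (Fin dA × Fin dB → ℂ)
        ((1 : ℂ) • tensorVec ((WithLp.equiv 2 (Fin dA → ℂ)).symm (x0 i))
          ((WithLp.equiv 2 (Fin dB → ℂ)).symm (y0 i)))) (p, q) = x0 i p * y0 i q := by
    intro i
    simp [tensorVec]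
  rw [Finset.sum_congr rfl fun i _ => hterm i]
  exact hxy p q
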